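/- Let n ≥ 1, let u_{i,j} ∈ ℂ (1 ≤ i < j ≤ n), and fix a linear order on the edges of K_n along which Re u is nondecreasing (i.e., if edge e precedes edge f then Re u_e ≤ Re u_f). Let t ∈ 𝒯_n be a spanning tree, let E(t) be the set of edges e ∉ t such that e is greater than every edge on the unique path in t between the endpoints of e, and let t_- be the forest consisting of those edges of t with Re u_{i,j} < 0. Then ∑_{ij ∈ t_-} Re u_{i,j} + ∑_{ij ∈ E(t)} Re u_{i,j} ≥ ∑_{{i,j}} Re u_{i,j}, where the last sum ranges over all pairs i < j such that i and j lie in the same connected component of the forest t_-. -/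

import Mathlib

open scoped Classical

/-- For a fixed linear order `lo` on the edges, `kruskalE lo t e` says that `e`
is an edge of the complete graph, not an edge of the spanning tree `t`, which
is greater (for `lo`) than every edge on the (unique) path in `t` between the
endpoints of `e`. -/
def kruskalE {n : ℕ} (lo : LinearOrder (Sym2 (Fin n))) (t : SimpleGraph (Fin n))
    (e : Sym2 (Fin n)) : Prop :=
  ¬ e.IsDiag ∧ e ∉ t.edgeSet ∧
    ∀ i j : Fin n, e = s(i, j) → ∀ p : t.Path i j, ∀ f ∈ p.1.edges, lo.lt f e

/-- The spanning forest `t_-` : the subgraph of `t` consisting of the edges of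
negative weight. -/
def negForest {n : ℕ} (t : SimpleGraph (Fin n)) (u : Sym2 (Fin n) → ℝ) :
    SimpleGraph (Fin n) where
  Adj i j := t.Adj i j ∧ u s(i, j) < 0
  symm := ⟨fun i j h => ⟨h.1.symm, by rw [Sym2.eq_swap]; exact h.2⟩⟩
  loopless := ⟨fun i h => t.loopless.irrefl i h.1⟩

lemma negForest_le {n : ℕ} (t : SimpleGraph (Fin n)) (w : Sym2 (Fin n) → ℝ) :
    negForest t w ≤ t := fun _ _ h => h.1


lemma mem_negForest_edgeSet {n : ℕ} {t : SimpleGraph (Fin n)} {w : Sym2 (Fin n) → ℝ}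
    {f : Sym2 (Fin n)} (h1 : f ∈ t.edgeSet) (h2 : w f < 0) :
    f ∈ (negForest t w).edgeSet := by
  induction f using Sym2.ind with
  | _ a b => exact ⟨h1, h2⟩


lemma negForest_edge_neg {n : ℕ} {t : SimpleGraph (Fin n)} {w : Sym2 (Fin n) → ℝ}
    {f : Sym2 (Fin n)} (h : f ∈ (negForest t w).edgeSet) :
    f ∈ t.edgeSet ∧ w f < 0 := by
  induction f using Sym2.ind with
  | _ a b => exact ⟨h.1, h.2⟩


lemma tree_path_edges_mem {n : ℕ} {t : SimpleGraph (Fin n)} (ht : t.IsTree)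
    (w : Sym2 (Fin n) → ℝ) {i j : Fin n}
    (h : (negForest t w).Reachable i j) (p : t.Walk i j) (hp : p.IsPath) :
    ∀ f ∈ p.edges, f ∈ (negForest t w).edgeSet := by
  obtain ⟨q⟩ := h
  have hsub : ∀ f ∈ (q.toPath : (negForest t w).Walk i j).edges, f ∈ t.edgeSet := fun f hf =>
    SimpleGraph.edgeSet_mono (negForest_le t w) ((q.toPath : (negForest t w).Walk i j).edges_subset_edgeSet hf)
  have hq'' : ((q.toPath : (negForest t w).Walk i j).transfer t hsub).IsPath :=
    q.toPath.2.transfer hsub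
  have huniq := ht.existsUnique_path i j
  have heq : p = (q.toPath : (negForest t w).Walk i j).transfer t hsub :=
    huniq.unique hp hq''
  intro f hf
  rw [heq, SimpleGraph.Walk.edges_transfer] at hf
  exact (q.toPath : (negForest t w).Walk i j).edges_subset_edgeSet hf


lemma edge_of_reachable {n : ℕ} {t : SimpleGraph (Fin n)} (ht : t.IsTree)
    {w : Sym2 (Fin n) → ℝ} {i j : Fin n} (hadj : t.Adj i j)
    (h : (negForest t w).Reachable i j) : (negForest t w).Adj i j := by
  have := tree_path_edges_mem ht w h (SimpleGraph.Path.singleton hadj).1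
    (SimpleGraph.Path.singleton hadj).2 s(i, j) (by simp [SimpleGraph.Path.singleton])
  exact this


lemma reach_of_kruskal {n : ℕ} {t : SimpleGraph (Fin n)} (ht : t.IsTree)
    {u : Sym2 (Fin n) → ℂ} {lo : LinearOrder (Sym2 (Fin n))}
    (hmono : ∀ e f, lo.le e f → (u e).re ≤ (u f).re) {i j : Fin n}
    (he : kruskalE lo t s(i, j)) (hneg : (u s(i, j)).re < 0) :
    (negForest t (fun e => (u e).re)).Reachable i j := by
  obtain ⟨q⟩ := ht.isConnected.preconnected i j
  have hedges : ∀ f ∈ (q.toPath : t.Walk i j).edges,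
      f ∈ (negForest t (fun e => (u e).re)).edgeSet := by
    intro f hf
    have hlt := he.2.2 i j rfl q.toPath f hf
    have hle : lo.le f s(i, j) := ((lo.lt_iff_le_not_ge f s(i,j)).mp hlt).1
    have hw : (u f).re ≤ (u s(i, j)).re := hmono f _ hle
    exact mem_negForest_edgeSet ((q.toPath : t.Walk i j).edges_subset_edgeSet hf)
      (lt_of_le_of_lt hw hneg)
  exact ⟨(q.toPath : t.Walk i j).transfer _ hedges⟩


lemma kruskal_of_reach_nonneg {n : ℕ} {t : SimpleGraph (Fin n)} (ht : t.IsTree)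
    {u : Sym2 (Fin n) → ℂ} {lo : LinearOrder (Sym2 (Fin n))}
    (hmono : ∀ e f, lo.le e f → (u e).re ≤ (u f).re) {i j : Fin n}
    (hr : (negForest t (fun e => (u e).re)).Reachable i j) (hij : i ≠ j)
    (hnt : s(i, j) ∉ t.edgeSet) (hnn : 0 ≤ (u s(i, j)).re) :
    kruskalE lo t s(i, j) := by
  refine ⟨by simpa using hij, hnt, ?_⟩
  intro a b hab p f hf
  have hrab : (negForest t (fun e => (u e).re)).Reachable a b := by
    rcases Sym2.eq_iff.mp hab with ⟨h1, h2⟩ | ⟨h1, h2⟩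
    · rw [← h1, ← h2]; exact hr
    · rw [← h2, ← h1]; exact hr.symm
  have hfin := tree_path_edges_mem ht _ hrab p.1 p.2 f hf
  have hwf : (u f).re < 0 := (negForest_edge_neg hfin).2
  have hnle : ¬ lo.le s(i, j) f := fun hle => absurd (hmono _ _ hle) (by linarith)
  rcases lo.le_total s(i, j) f with h | h
  · exact absurd h hnle
  · exact (lo.lt_iff_le_not_ge f s(i, j)).mpr ⟨h, hnle⟩

/-- **Key inequality, complex case**: for complex weights `u`, a spanning tree
`t`, and an edge order along which `Re u` is nondecreasing,
`∑_{e ∈ t_-} Re u_e + ∑_{e ∈ E(t)} Re u_e ≥ ∑ Re u_{i,j}`, where the last sum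
is over pairs `i < j` lying in the same connected component of the forest
`t_-` (the edges of `t` with `Re u < 0`). -/
theorem kruskal_key_inequality_complex (n : ℕ) (hn : 1 ≤ n)
    (u : Sym2 (Fin n) → ℂ)
    (lo : LinearOrder (Sym2 (Fin n))) (hmono : ∀ e f, lo.le e f → (u e).re ≤ (u f).re)
    (t : SimpleGraph (Fin n)) (ht : t.IsTree) :
    ∑ p ∈ Finset.univ.filter
        (fun p : Fin n × Fin n => p.1 < p.2 ∧
          (negForest t (fun e => (u e).re)).Reachable p.1 p.2),
        (u s(p.1, p.2)).re
      ≤ (∑ e ∈ (negForest t (fun e => (u e).re)).edgeFinset, (u e).re)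
        + ∑ e ∈ Finset.univ.filter (kruskalE lo t), (u e).re := by
  set G := negForest t (fun e => (u e).re) with hG
  set P := Finset.univ.filter
      (fun p : Fin n × Fin n => p.1 < p.2 ∧ G.Reachable p.1 p.2) with hP
  set Q := P.image (fun p => s(p.1, p.2)) with hQ
  -- membership facts
  have hmemQ : ∀ i j : Fin n, i ≠ j → G.Reachable i j → s(i, j) ∈ Q := by
    intro i j hij hr
    rcases lt_or_gt_of_ne hij with h | h
    · exact Finset.mem_image.mpr ⟨(i, j),
        Finset.mem_filter.mpr ⟨Finset.mem_univ _, h, hr⟩, rfl⟩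
    · exact Finset.mem_image.mpr ⟨(j, i),
        Finset.mem_filter.mpr ⟨Finset.mem_univ _, h, hr.symm⟩, Sym2.eq_swap⟩
  have hQmem : ∀ e ∈ Q, ∃ i j : Fin n, i < j ∧ G.Reachable i j ∧ e = s(i, j) := by
    intro e he
    obtain ⟨p, hp, hpe⟩ := Finset.mem_image.mp he
    obtain ⟨-, h1, h2⟩ := Finset.mem_filter.mp hp
    exact ⟨p.1, p.2, h1, h2, hpe.symm⟩
  -- LHS equals sum over Q
  have hinj : ∀ p ∈ P, ∀ q ∈ P, s(p.1, p.2) = s(q.1, q.2) → p = q := by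
    intro p hp q hq hpq
    obtain ⟨-, hp1, -⟩ := Finset.mem_filter.mp hp
    obtain ⟨-, hq1, -⟩ := Finset.mem_filter.mp hq
    rcases Sym2.eq_iff.mp hpq with ⟨h1, h2⟩ | ⟨h1, h2⟩
    · exact Prod.ext h1 h2
    · exact absurd (h1 ▸ h2 ▸ hp1) (by rw [h1, h2] at hp1; omega)
  have hsumPQ : ∑ p ∈ P, (u s(p.1, p.2)).re = ∑ e ∈ Q, (u e).re := by
    rw [hQ]; exact (Finset.sum_image (f := fun e => (u e).re) hinj).symm
  rw [hsumPQ]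
  -- partition Q
  have hsplit1 : ∑ e ∈ Q, (u e).re
      = ∑ e ∈ Q.filter (fun e => e ∈ t.edgeSet), (u e).re
        + ∑ e ∈ Q.filter (fun e => e ∉ t.edgeSet), (u e).re :=
    (Finset.sum_filter_add_sum_filter_not Q _ _).symm
  have hsplit2 : ∑ e ∈ Q.filter (fun e => e ∉ t.edgeSet), (u e).re
      = ∑ e ∈ (Q.filter (fun e => e ∉ t.edgeSet)).filter (kruskalE lo t), (u e).re
        + ∑ e ∈ (Q.filter (fun e => e ∉ t.edgeSet)).filter
            (fun e => ¬ kruskalE lo t e), (u e).re :=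
    (Finset.sum_filter_add_sum_filter_not _ _ _).symm
  -- (a) : first part equals edgeFinset of G
  have ha : Q.filter (fun e => e ∈ t.edgeSet) = G.edgeFinset := by
    ext e
    simp only [Finset.mem_filter, SimpleGraph.mem_edgeFinset]
    constructor
    · rintro ⟨heQ, het⟩
      obtain ⟨i, j, hij, hr, rfl⟩ := hQmem e heQ
      exact edge_of_reachable ht ((SimpleGraph.mem_edgeSet _).mp het) hr
    · intro he
      induction e using Sym2.ind with
      | _ a b =>
        have hadj : G.Adj a b := (SimpleGraph.mem_edgeSet _).mp he
        exact ⟨hmemQ a b hadj.ne hadj.reachable,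
          (SimpleGraph.mem_edgeSet _).mpr hadj.1⟩
  -- (b) : kruskal part
  have hb : ∑ e ∈ (Q.filter (fun e => e ∉ t.edgeSet)).filter (kruskalE lo t), (u e).re
      ≤ ∑ e ∈ Finset.univ.filter (kruskalE lo t), (u e).re := by
    apply Finset.sum_le_sum_of_subset_of_nonneg
    · intro e he
      obtain ⟨-, hk⟩ := Finset.mem_filter.mp he
      exact Finset.mem_filter.mpr ⟨Finset.mem_univ _, hk⟩
    · intro e heu hne
      obtain ⟨-, hk⟩ := Finset.mem_filter.mp heu
      by_contra hneg
      push_neg at hneg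
      apply hne
      refine Finset.mem_filter.mpr ⟨Finset.mem_filter.mpr ⟨?_, hk.2.1⟩, hk⟩
      induction e using Sym2.ind with
      | _ a b =>
        have hab : a ≠ b := by simpa using hk.1
        exact hmemQ a b hab (reach_of_kruskal ht hmono hk hneg)
  -- (c) : rest is nonpositive
  have hc : ∑ e ∈ (Q.filter (fun e => e ∉ t.edgeSet)).filter
      (fun e => ¬ kruskalE lo t e), (u e).re ≤ 0 := by
    apply Finset.sum_nonpos
    intro e he
    obtain ⟨he1, hnk⟩ := Finset.mem_filter.mp he
    obtain ⟨heQ, hnt⟩ := Finset.mem_filter.mp he1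
    obtain ⟨i, j, hij, hr, rfl⟩ := hQmem e heQ
    by_contra hpos
    push_neg at hpos
    exact hnk (kruskal_of_reach_nonneg ht hmono hr hij.ne hnt hpos.le)
  rw [hsplit1, hsplit2, ha]
  linarith
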